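/- Assume S + R·(I − P_add) is positive definite. Then Λ_{S,R} is invertible and (S + R·(I − P_add))⁻¹ = (I + A_R·Zᵀ·Λ_{S,R}⁻¹·Z)·(S + R·I)⁻¹ (formula (7) for the penalized estimator). -/
import Mathlib


open Matrix

/-- If `S + R·(I − P_add)` is positive definite, then `Λ_{S,R}` is
invertible and `(S + R·(I − P_add))⁻¹ = (I + A_R·Zᵀ·Λ_{S,R}⁻¹·Z)·(S + R·I)⁻¹`
(formula (7) for the penalized estimator). -/
theorem penalized_inverse_formula
    {N q : ℕ} (hN : 0 < N) (hq : 0 < q)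
    (S : Matrix (Fin N) (Fin N) ℝ) (hS : S.PosSemidef)
    (R : ℝ) (hR : 0 < R)
    (Z : Matrix (Fin q) (Fin N) ℝ)
    (hZ1 : (Zᵀ * Z) * (Zᵀ * Z) = Zᵀ * Z)
    (hZ2 : (Z * Zᵀ) * (Z * Zᵀ) = Z * Zᵀ)
    (hSR : (S + R • (1 : Matrix (Fin N) (Fin N) ℝ)).PosDef)
    (A : Matrix (Fin N) (Fin N) ℝ)
    (hA : A = R • (S + R • (1 : Matrix (Fin N) (Fin N) ℝ))⁻¹)
    (Λ : Matrix (Fin q) (Fin q) ℝ)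
    (hΛ : Λ = (1 : Matrix (Fin q) (Fin q) ℝ) - Z * A * Zᵀ)
    (hpen : (S + R • ((1 : Matrix (Fin N) (Fin N) ℝ) - Zᵀ * Z)).PosDef) :
    IsUnit Λ ∧
      (S + R • ((1 : Matrix (Fin N) (Fin N) ℝ) - Zᵀ * Z))⁻¹ =
        ((1 : Matrix (Fin N) (Fin N) ℝ) + A * Zᵀ * Λ⁻¹ * Z) *
          (S + R • (1 : Matrix (Fin N) (Fin N) ℝ))⁻¹ := by
  set M : Matrix (Fin N) (Fin N) ℝ := S + R • 1 with hM
  set P : Matrix (Fin N) (Fin N) ℝ := S + R • (1 - Zᵀ * Z) with hP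
  set V : Matrix (Fin N) (Fin q) ℝ := R • Zᵀ with hV
  have hMd : IsUnit M.det := isUnit_iff_ne_zero.mpr hSR.det_pos.ne'
  have hPd : IsUnit P.det := isUnit_iff_ne_zero.mpr hpen.det_pos.ne'
  have hMl : M⁻¹ * M = 1 := nonsing_inv_mul _ hMd
  have hMr : M * M⁻¹ = 1 := mul_nonsing_inv _ hMd
  have hPl : P⁻¹ * P = 1 := nonsing_inv_mul _ hPd
  have hPr : P * P⁻¹ = 1 := mul_nonsing_inv _ hPd
  have hVZ : V * Z = M - P := by
    rw [hV, hM, hP, smul_sub, Matrix.smul_mul]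
    abel
  have hAZ : A * Zᵀ = M⁻¹ * V := by
    rw [hA, hV, Matrix.smul_mul, Matrix.mul_smul]
  have hΛ' : Λ = 1 - Z * M⁻¹ * V := by
    rw [hΛ, hA, hV]
    simp [Matrix.mul_smul, Matrix.smul_mul]
  -- generic right-associated cancellation lemmas
  have hMl' : ∀ {m : Type} (W : Matrix (Fin N) m ℝ), M⁻¹ * (M * W) = W := by
    intro m W; rw [← Matrix.mul_assoc, hMl, Matrix.one_mul]
  have hMr' : ∀ {m : Type} (W : Matrix (Fin N) m ℝ), M * (M⁻¹ * W) = W := by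
    intro m W; rw [← Matrix.mul_assoc, hMr, Matrix.one_mul]
  have hPl' : ∀ {m : Type} (W : Matrix (Fin N) m ℝ), P⁻¹ * (P * W) = W := by
    intro m W; rw [← Matrix.mul_assoc, hPl, Matrix.one_mul]
  have hPr' : ∀ {m : Type} (W : Matrix (Fin N) m ℝ), P * (P⁻¹ * W) = W := by
    intro m W; rw [← Matrix.mul_assoc, hPr, Matrix.one_mul]
  have hVZ' : ∀ {m : Type} [Fintype m] (W : Matrix (Fin N) m ℝ),
      V * (Z * W) = M * W - P * W := by
    intro m _ W; rw [← Matrix.mul_assoc, hVZ, Matrix.sub_mul]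
  set B : Matrix (Fin q) (Fin q) ℝ := 1 + Z * P⁻¹ * V with hB
  have hΛB : Λ * B = 1 := by
    rw [hΛ', hB]
    simp only [Matrix.mul_add, Matrix.add_mul, Matrix.mul_sub, Matrix.sub_mul,
      Matrix.mul_one, Matrix.one_mul, Matrix.mul_assoc, hVZ', hMl', hMr', hPl', hPr',
      hVZ, hMl, hMr, hPl, hPr]
    abel
  have hBΛ : B * Λ = 1 := by
    rw [hΛ', hB]
    simp only [Matrix.mul_add, Matrix.add_mul, Matrix.mul_sub, Matrix.sub_mul,
      Matrix.mul_one, Matrix.one_mul, Matrix.mul_assoc, hVZ', hMl', hMr', hPl', hPr',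
      hVZ, hMl, hMr, hPl, hPr]
    abel
  have hΛinv : Λ⁻¹ = B := inv_eq_right_inv hΛB
  refine ⟨⟨⟨Λ, B, hΛB, hBΛ⟩, rfl⟩, ?_⟩
  refine inv_eq_left_inv ?_
  rw [hΛinv, hAZ, hB]
  simp only [Matrix.mul_add, Matrix.add_mul, Matrix.mul_sub, Matrix.sub_mul,
    Matrix.mul_one, Matrix.one_mul, Matrix.mul_assoc, hVZ', hMl', hMr', hPl', hPr',
    hVZ, hMl, hMr, hPl, hPr]
  abel
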